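/- Let F be a graph with a cut-edge e such that G and H are the two components of F − e. If k is an integer with 2 ≤ k < min{δ(G), δ(H)}, then γ_{×k,t}(G_I) + γ_{×k,t}(H_I) − 2 ≤ γ_{×k,t}(F_I) ≤ γ_{×k,t}(G_I) + γ_{×k,t}(H_I). -/

import Mathlib

open SimpleGraph

/-- The inflated graph `G_I` of a graph `G`: its vertices are the darts (oriented edges) of
`G`; the darts with first coordinate `x` form the clique `X_x` (of size `deg x`), and each
edge `xy` of `G` gives the "blue" edge between the dart `(x,y)` and its reverse `(y,x)`;
these blue edges form a perfect matching.  Equivalently, `inflation G` is the line graph of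
the subdivision of `G`. -/
def inflation {V : Type*} (G : SimpleGraph V) : SimpleGraph G.Dart :=
  SimpleGraph.fromRel (fun d₁ d₂ => d₁.toProd.1 = d₂.toProd.1 ∨ d₁.toProd = d₂.toProd.swap)

/-- `S` is a `k`-tuple total dominating set of `H`: every vertex has at least `k`
neighbours in `S`. -/
def IsKTDS {W : Type*} (H : SimpleGraph W) (k : ℕ) (S : Set W) : Prop :=
  ∀ v : W, k ≤ (S ∩ H.neighborSet v).ncard

/-- The `k`-tuple total domination number of `H`: the minimum cardinality of a `k`-tuple
total dominating set. -/
noncomputable def ktdn {W : Type*} (H : SimpleGraph W) (k : ℕ) : ℕ :=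
  sInf {n | ∃ S : Set W, IsKTDS H k S ∧ S.ncard = n}

/-- `H` is a 2-factor of `G`: a spanning 2-regular subgraph of `G`, i.e. a vertex-disjoint
union of cycles covering all vertices. -/
def IsTwoFactor {V : Type*} (G H : SimpleGraph V) : Prop :=
  H ≤ G ∧ ∀ v : V, (H.neighborSet v).ncard = 2

/-- `G` is a `k`-Hamiltonian-like decomposable graph (kHLD-graph): `G` contains `k`
pairwise edge-disjoint 2-factors. -/
def IsKHLD {V : Type*} (G : SimpleGraph V) (k : ℕ) : Prop :=
  ∃ F : Fin k → SimpleGraph V, (∀ i, IsTwoFactor G (F i)) ∧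
    ∀ i j, i ≠ j → Disjoint (F i) (F j)

/-- `M` is a perfect matching of `G`, viewed as a 1-regular spanning subgraph. -/
def IsPerfectMatchingGraph {V : Type*} (G M : SimpleGraph V) : Prop :=
  M ≤ G ∧ ∀ v : V, (M.neighborSet v).ncard = 1

/-- `M` is a matching of `G`: a subgraph of maximum degree at most 1. -/
def IsMatchingGraph {V : Type*} (G M : SimpleGraph V) : Prop :=
  M ≤ G ∧ ∀ v : V, (M.neighborSet v).ncard ≤ 1

/-- `G` is a kHLPM-graph: `G` contains `k` pairwise edge-disjoint 2-factors together with
a perfect matching edge-disjoint from each of these 2-factors. -/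
def IsKHLPM {V : Type*} (G : SimpleGraph V) (k : ℕ) : Prop :=
  ∃ (F : Fin k → SimpleGraph V) (M : SimpleGraph V),
    (∀ i, IsTwoFactor G (F i)) ∧ (∀ i j, i ≠ j → Disjoint (F i) (F j)) ∧
    IsPerfectMatchingGraph G M ∧ ∀ i, Disjoint M (F i)

/-- `G` is a kHLMM-graph: `G` contains `k` pairwise edge-disjoint 2-factors together with
a matching of size `⌊n/2⌋` edge-disjoint from each of these 2-factors. -/
def IsKHLMM {V : Type*} [Fintype V] (G : SimpleGraph V) (k : ℕ) : Prop :=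
  ∃ (F : Fin k → SimpleGraph V) (M : SimpleGraph V),
    (∀ i, IsTwoFactor G (F i)) ∧ (∀ i j, i ≠ j → Disjoint (F i) (F j)) ∧
    IsMatchingGraph G M ∧ M.edgeSet.ncard = Fintype.card V / 2 ∧ ∀ i, Disjoint M (F i)

/-- The graph `F` on `V ⊕ W` obtained from the disjoint union of `G` (on `V`) and `H`
(on `W`) by adding the single edge between `x : V` and `y : W`.  When `G` and `H` are
connected, this added edge is a cut-edge of `F` whose removal leaves exactly the two
components `G` and `H`. -/
def joinByEdge {V W : Type*} (G : SimpleGraph V) (H : SimpleGraph W) (x : V) (y : W) :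
    SimpleGraph (V ⊕ W) :=
  SimpleGraph.fromRel (fun a b =>
    match a, b with
    | Sum.inl u, Sum.inl v => G.Adj u v
    | Sum.inr u, Sum.inr v => H.Adj u v
    | Sum.inl u, Sum.inr v => u = x ∧ v = y
    | Sum.inr _, Sum.inl _ => False)

/-- The generalized Petersen graph `P(n,m)`: vertices `a_i` (the left copies) and `b_i`
(the right copies) for `i ∈ ZMod n`, with edges `a_i a_{i+1}`, `a_i b_i`, `b_i b_{i+m}`. -/
def genPetersen (n m : ℕ) : SimpleGraph (ZMod n ⊕ ZMod n) :=
  SimpleGraph.fromRel (fun a b =>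
    match a, b with
    | Sum.inl i, Sum.inl j => j = i + 1
    | Sum.inl i, Sum.inr j => j = i
    | Sum.inr i, Sum.inr j => j = i + (m : ZMod n)
    | Sum.inr _, Sum.inl _ => False)

/-- Cyclic distance between `i` and `j` on the cycle `ZMod n`. -/
def cycDist (n : ℕ) (i j : ZMod n) : ℕ := min (i - j).val (j - i).val

/-- The Harary graph `H_{m,n}` on `ZMod n`: each vertex is adjacent to the nearest `m/2`
vertices in each direction around the circle; if `m` is odd and `n` is even, each vertex
is also adjacent to the diametrically opposite vertex; if `m` and `n` are both odd, the
edges `(i, i + (n-1)/2)` for `0 ≤ i ≤ (n-1)/2` are added instead. -/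
def harary (m n : ℕ) : SimpleGraph (ZMod n) :=
  SimpleGraph.fromRel (fun i j =>
    (1 ≤ cycDist n i j ∧ cycDist n i j ≤ m / 2) ∨
    (m % 2 = 1 ∧ n % 2 = 0 ∧ j = i + ((n / 2 : ℕ) : ZMod n)) ∨
    (m % 2 = 1 ∧ n % 2 = 1 ∧ (∃ t : ℕ, t ≤ (n - 1) / 2 ∧ i = (t : ZMod n)) ∧
      j = i + (((n - 1) / 2 : ℕ) : ZMod n)))

/-- The graph obtained by gluing the graphs `G i` (on vertex types `V i`) at the
distinguished vertices `x i`, which are all identified to the single vertex `none`.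
The `v`-components of the resulting graph at the cut-vertex `v = none` are exactly
(canonical copies of) the graphs `G i`. -/
def wedgeAt {m : ℕ} {V : Fin m → Type*} (G : ∀ i, SimpleGraph (V i)) (x : ∀ i, V i) :
    SimpleGraph (Option (Σ i : Fin m, {u : V i // u ≠ x i})) :=
  SimpleGraph.fromRel (fun a b =>
    match a, b with
    | none, some ⟨i, u⟩ => (G i).Adj (x i) u.val
    | some ⟨i, u⟩, some ⟨j, w⟩ => ∃ h : i = j, (G j).Adj (cast (congrArg V h) u.val) w.val
    | _, _ => False)

set_option linter.unusedSectionVars false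
open Sum in
set_option linter.unusedSectionVars false in
section
namespace Stmt8A


instance dartFinite {V : Type*} [Finite V] (G : SimpleGraph V) : Finite G.Dart :=
  Finite.of_injective _ SimpleGraph.Dart.toProd_injective

lemma symm_ne {V : Type*} {G : SimpleGraph V} (d : G.Dart) : d.symm ≠ d := by
  intro h
  have h2 : d.toProd.swap = d.toProd := congrArg SimpleGraph.Dart.toProd h
  exact d.fst_ne_snd (congrArg Prod.snd h2)

lemma mem_inflation_nbhd {V : Type*} {G : SimpleGraph V} {d e : G.Dart} :
    e ∈ (inflation G).neighborSet d ↔ (e ≠ d ∧ e.toProd.1 = d.toProd.1) ∨ e = d.symm := by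
  simp only [SimpleGraph.mem_neighborSet, inflation, SimpleGraph.fromRel_adj]
  constructor
  · rintro ⟨hne, (h | h) | (h | h)⟩
    · exact Or.inl ⟨Ne.symm hne, h.symm⟩
    · exact Or.inr (SimpleGraph.Dart.ext _ _ (by rw [SimpleGraph.Dart.symm_toProd, h, Prod.swap_swap]))
    · exact Or.inl ⟨Ne.symm hne, h⟩
    · exact Or.inr (SimpleGraph.Dart.ext _ _ (by rw [SimpleGraph.Dart.symm_toProd, h]))
  · rintro (⟨hne, h⟩ | rfl)
    · exact ⟨Ne.symm hne, Or.inl (Or.inl h.symm)⟩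
    · exact ⟨(symm_ne d).symm, Or.inl (Or.inr (by rw [SimpleGraph.Dart.symm_toProd, Prod.swap_swap]))⟩

lemma symm_mem_nbhd {V : Type*} {G : SimpleGraph V} (d : G.Dart) :
    d.symm ∈ (inflation G).neighborSet d := mem_inflation_nbhd.mpr (Or.inr rfl)

lemma mem_nbhd_of_head {V : Type*} {G : SimpleGraph V} {d e : G.Dart} (hne : e ≠ d)
    (h : e.toProd.1 = d.toProd.1) : e ∈ (inflation G).neighborSet d :=
  mem_inflation_nbhd.mpr (Or.inl ⟨hne, h⟩)



def Xs {V : Type*} (G : SimpleGraph V) (x : V) : Set G.Dart := {d | d.toProd.1 = x}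

variable {V : Type*} {G : SimpleGraph V}

lemma nbhd_subset (d : G.Dart) :
    (inflation G).neighborSet d ⊆ (Xs G d.toProd.1 \ {d}) ∪ {d.symm} := by
  intro e he
  rcases mem_inflation_nbhd.mp he with ⟨hne, h⟩ | rfl
  · exact Or.inl ⟨h, hne⟩
  · exact Or.inr rfl

lemma count_nbhd_le [Finite V] (S : Set G.Dart) (d : G.Dart) :
    (S ∩ (inflation G).neighborSet d).ncard ≤ (S ∩ (Xs G d.toProd.1 \ {d})).ncard + 1 := by
  have hsub : S ∩ (inflation G).neighborSet d ⊆ (S ∩ (Xs G d.toProd.1 \ {d})) ∪ {d.symm} := by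
    rintro e ⟨heS, heN⟩
    rcases nbhd_subset d heN with h | h
    · exact Or.inl ⟨heS, h⟩
    · exact Or.inr h
  calc (S ∩ (inflation G).neighborSet d).ncard
      ≤ ((S ∩ (Xs G d.toProd.1 \ {d})) ∪ {d.symm}).ncard :=
        Set.ncard_le_ncard hsub (Set.toFinite _)
    _ ≤ (S ∩ (Xs G d.toProd.1 \ {d})).ncard + ({d.symm} : Set G.Dart).ncard :=
        Set.ncard_union_le _ _
    _ = (S ∩ (Xs G d.toProd.1 \ {d})).ncard + 1 := by rw [Set.ncard_singleton]

lemma clique_ge [Finite V] {k : ℕ} (hk : 2 ≤ k) {S : Set G.Dart}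
    (hS : IsKTDS (inflation G) k S) {x : V} (d : G.Dart) (hd : d.toProd.1 = x) :
    k ≤ (S ∩ Xs G x).ncard := by
  by_contra hcon
  push_neg at hcon
  rcases Set.eq_empty_or_nonempty (S ∩ Xs G x) with hA | ⟨d', hd'⟩
  · have h1 := hS d
    have h2 := count_nbhd_le S d
    have h3 : S ∩ (Xs G d.toProd.1 \ {d}) ⊆ S ∩ Xs G x := by
      rintro e ⟨heS, he, _⟩; exact ⟨heS, by rw [← hd]; exact he⟩
    have h4 : (S ∩ (Xs G d.toProd.1 \ {d})).ncard ≤ 0 := by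
      rw [← Set.ncard_empty G.Dart, ← hA]
      exact Set.ncard_le_ncard h3 (Set.toFinite _)
    omega
  · have h1 := hS d'
    have h2 := count_nbhd_le S d'
    have hd'x : d'.toProd.1 = x := hd'.2
    have h3 : S ∩ (Xs G d'.toProd.1 \ {d'}) ⊆ (S ∩ Xs G x) \ {d'} := by
      rintro e ⟨heS, he, hne⟩
      exact ⟨⟨heS, by rw [← hd'x]; exact he⟩, hne⟩
    have h4 : (S ∩ (Xs G d'.toProd.1 \ {d'})).ncard ≤ (S ∩ Xs G x).ncard - 1 := by
      have := Set.ncard_le_ncard h3 (Set.toFinite _)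
      rwa [Set.ncard_diff_singleton_of_mem hd'] at this
      -- check signature
    have hpos : 1 ≤ (S ∩ Xs G x).ncard := (Set.ncard_pos (Set.toFinite _)).mpr ⟨d', hd'⟩
    omega

lemma Xs_ncard (x : V) : (Xs G x).ncard = (G.neighborSet x).ncard := by
  have himg : (fun d : G.Dart => d.toProd.2) '' Xs G x = G.neighborSet x := by
    ext v
    constructor
    · rintro ⟨d, hd, rfl⟩
      exact hd ▸ d.adj
    · intro hv
      exact ⟨⟨(x, v), hv⟩, rfl, rfl⟩
  have hinj : Set.InjOn (fun d : G.Dart => d.toProd.2) (Xs G x) := by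
    intro a ha b hb h
    exact SimpleGraph.Dart.ext _ _ (Prod.ext (ha.trans hb.symm) h)
  rw [← himg, Set.ncard_image_of_injOn hinj]

lemma univ_ktds [Finite V] {k : ℕ} (hdeg : ∀ u : V, k + 1 ≤ (Xs G u).ncard) :
    IsKTDS (inflation G) k (Set.univ : Set G.Dart) := by
  intro d
  have hsub : Xs G d.toProd.1 \ {d} ⊆ Set.univ ∩ (inflation G).neighborSet d := by
    rintro e ⟨he, hne⟩
    exact ⟨trivial, mem_nbhd_of_head hne he⟩
  have h1 : (Xs G d.toProd.1 \ {d}).ncard = (Xs G d.toProd.1).ncard - 1 :=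
    Set.ncard_diff_singleton_of_mem rfl
  have h2 := Set.ncard_le_ncard hsub (Set.toFinite _)
  have h3 := hdeg d.toProd.1
  omega

lemma ktdn_le {W : Type*} {H : SimpleGraph W} {k : ℕ} {S : Set W} (hS : IsKTDS H k S) :
    ktdn H k ≤ S.ncard := Nat.sInf_le ⟨S, hS, rfl⟩

lemma ktdn_attained {W : Type*} {H : SimpleGraph W} {k : ℕ} {S₀ : Set W} (h : IsKTDS H k S₀) :
    ∃ S, IsKTDS H k S ∧ S.ncard = ktdn H k :=
  Nat.sInf_mem (⟨S₀.ncard, S₀, h, rfl⟩ : {n | ∃ S : Set W, IsKTDS H k S ∧ S.ncard = n}.Nonempty)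



variable {V W : Type*} {G : SimpleGraph V} {H : SimpleGraph W} {x : V} {y : W}

lemma jbe_ll {u v : V} : (joinByEdge G H x y).Adj (inl u) (inl v) ↔ G.Adj u v := by
  unfold joinByEdge
  rw [SimpleGraph.fromRel_adj]
  constructor
  · rintro ⟨hne, h | h⟩
    · exact h
    · exact h.symm
  · intro h
    exact ⟨by simpa using h.ne, Or.inl h⟩

lemma jbe_rr {u v : W} : (joinByEdge G H x y).Adj (inr u) (inr v) ↔ H.Adj u v := by
  unfold joinByEdge
  rw [SimpleGraph.fromRel_adj]
  constructor
  · rintro ⟨hne, h | h⟩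
    · exact h
    · exact h.symm
  · intro h
    exact ⟨by simpa using h.ne, Or.inl h⟩

lemma jbe_lr {u : V} {v : W} : (joinByEdge G H x y).Adj (inl u) (inr v) ↔ u = x ∧ v = y := by
  unfold joinByEdge
  rw [SimpleGraph.fromRel_adj]
  constructor
  · rintro ⟨hne, h | h⟩
    · exact h
    · exact h.elim
  · rintro ⟨rfl, rfl⟩
    exact ⟨by simp, Or.inl ⟨rfl, rfl⟩⟩

lemma jbe_rl {u : V} {v : W} : (joinByEdge G H x y).Adj (inr v) (inl u) ↔ u = x ∧ v = y :=
  (joinByEdge G H x y).adj_comm _ _ |>.trans jbe_lr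

def liftG (G : SimpleGraph V) (H : SimpleGraph W) (x : V) (y : W) :
    G.Dart → (joinByEdge G H x y).Dart :=
  fun d => ⟨(inl d.toProd.1, inl d.toProd.2), jbe_ll.mpr d.adj⟩

def liftH (G : SimpleGraph V) (H : SimpleGraph W) (x : V) (y : W) :
    H.Dart → (joinByEdge G H x y).Dart :=
  fun d => ⟨(inr d.toProd.1, inr d.toProd.2), jbe_rr.mpr d.adj⟩

def E1 (G : SimpleGraph V) (H : SimpleGraph W) (x : V) (y : W) : (joinByEdge G H x y).Dart :=
  ⟨(inl x, inr y), jbe_lr.mpr ⟨rfl, rfl⟩⟩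

def E2 (G : SimpleGraph V) (H : SimpleGraph W) (x : V) (y : W) : (joinByEdge G H x y).Dart :=
  (E1 G H x y).symm

@[simp] lemma liftG_toProd (d : G.Dart) :
    (liftG G H x y d).toProd = (inl d.toProd.1, inl d.toProd.2) := rfl

@[simp] lemma liftH_toProd (d : H.Dart) :
    (liftH G H x y d).toProd = (inr d.toProd.1, inr d.toProd.2) := rfl

@[simp] lemma E1_toProd : (E1 G H x y).toProd = (inl x, inr y) := rfl

@[simp] lemma E2_toProd : (E2 G H x y).toProd = (inr y, inl x) := rfl

lemma liftG_inj : Function.Injective (liftG G H x y) := by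
  intro a b h
  have := congrArg SimpleGraph.Dart.toProd h
  simp only [liftG_toProd, Prod.mk.injEq, inl.injEq] at this
  exact SimpleGraph.Dart.ext _ _ (Prod.ext this.1 this.2)

lemma liftH_inj : Function.Injective (liftH G H x y) := by
  intro a b h
  have := congrArg SimpleGraph.Dart.toProd h
  simp only [liftH_toProd, Prod.mk.injEq, inr.injEq] at this
  exact SimpleGraph.Dart.ext _ _ (Prod.ext this.1 this.2)

lemma liftG_symm (d : G.Dart) : (liftG G H x y d).symm = liftG G H x y d.symm :=
  SimpleGraph.Dart.ext _ _ rfl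

lemma liftH_symm (d : H.Dart) : (liftH G H x y d).symm = liftH G H x y d.symm :=
  SimpleGraph.Dart.ext _ _ rfl

lemma E1_ne_E2 : E1 G H x y ≠ E2 G H x y := by
  intro h
  have := congrArg (fun d : (joinByEdge G H x y).Dart => d.toProd.1) h
  simp at this

lemma liftG_ne_E1 (d : G.Dart) : liftG G H x y d ≠ E1 G H x y := by
  intro h
  have := congrArg (fun d : (joinByEdge G H x y).Dart => d.toProd.2) h
  simp at this

lemma liftG_ne_E2 (d : G.Dart) : liftG G H x y d ≠ E2 G H x y := by
  intro h
  have := congrArg (fun d : (joinByEdge G H x y).Dart => d.toProd.1) h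
  simp at this

lemma liftH_ne_E1 (d : H.Dart) : liftH G H x y d ≠ E1 G H x y := by
  intro h
  have := congrArg (fun d : (joinByEdge G H x y).Dart => d.toProd.1) h
  simp at this

lemma liftH_ne_E2 (d : H.Dart) : liftH G H x y d ≠ E2 G H x y := by
  intro h
  have := congrArg (fun d : (joinByEdge G H x y).Dart => d.toProd.2) h
  simp at this

lemma liftG_ne_liftH (d : G.Dart) (e : H.Dart) : liftG G H x y d ≠ liftH G H x y e := by
  intro h
  have := congrArg (fun d : (joinByEdge G H x y).Dart => d.toProd.1) h
  simp at this

lemma dart_cases (D : (joinByEdge G H x y).Dart) :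
    (∃ d, D = liftG G H x y d) ∨ (∃ d, D = liftH G H x y d) ∨
      D = E1 G H x y ∨ D = E2 G H x y := by
  obtain ⟨⟨a, b⟩, hadj⟩ := D
  cases a with
  | inl u =>
    cases b with
    | inl v => exact Or.inl ⟨⟨(u, v), jbe_ll.mp hadj⟩, rfl⟩
    | inr v =>
      obtain ⟨rfl, rfl⟩ := jbe_lr.mp hadj
      exact Or.inr (Or.inr (Or.inl rfl))
  | inr u =>
    cases b with
    | inl v =>
      obtain ⟨rfl, rfl⟩ := jbe_rl.mp hadj
      exact Or.inr (Or.inr (Or.inr rfl))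
    | inr v => exact Or.inr (Or.inl ⟨⟨(u, v), jbe_rr.mp hadj⟩, rfl⟩)



variable {V W : Type*} {G : SimpleGraph V} {H : SimpleGraph W} {x : V} {y : W}

lemma liftG_nbhd {d e : G.Dart} (h : e ∈ (inflation G).neighborSet d) :
    liftG G H x y e ∈ (inflation (joinByEdge G H x y)).neighborSet (liftG G H x y d) := by
  rcases mem_inflation_nbhd.mp h with ⟨hne, hh⟩ | rfl
  · exact mem_nbhd_of_head (fun hc => hne (liftG_inj hc)) (by simp [hh])
  · rw [← liftG_symm]; exact symm_mem_nbhd _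

lemma liftH_nbhd {d e : H.Dart} (h : e ∈ (inflation H).neighborSet d) :
    liftH G H x y e ∈ (inflation (joinByEdge G H x y)).neighborSet (liftH G H x y d) := by
  rcases mem_inflation_nbhd.mp h with ⟨hne, hh⟩ | rfl
  · exact mem_nbhd_of_head (fun hc => hne (liftH_inj hc)) (by simp [hh])
  · rw [← liftH_symm]; exact symm_mem_nbhd _

lemma nbhd_liftG_subset (d : G.Dart) :
    (inflation (joinByEdge G H x y)).neighborSet (liftG G H x y d) ⊆
      liftG G H x y '' ((inflation G).neighborSet d) ∪ {E1 G H x y} := by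
  intro D hD
  rcases mem_inflation_nbhd.mp hD with ⟨hne, hh⟩ | rfl
  · rcases dart_cases D with ⟨e, rfl⟩ | ⟨e, rfl⟩ | rfl | rfl
    · refine Or.inl ⟨e, ?_, rfl⟩
      have h1 : e.toProd.1 = d.toProd.1 := by simpa using hh
      exact mem_nbhd_of_head (fun hc => hne (congrArg _ hc)) h1
    · simp at hh
    · exact Or.inr rfl
    · simp at hh
  · rw [liftG_symm]
    exact Or.inl ⟨d.symm, symm_mem_nbhd d, rfl⟩

lemma nbhd_liftH_subset (d : H.Dart) :
    (inflation (joinByEdge G H x y)).neighborSet (liftH G H x y d) ⊆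
      liftH G H x y '' ((inflation H).neighborSet d) ∪ {E2 G H x y} := by
  intro D hD
  rcases mem_inflation_nbhd.mp hD with ⟨hne, hh⟩ | rfl
  · rcases dart_cases D with ⟨e, rfl⟩ | ⟨e, rfl⟩ | rfl | rfl
    · simp at hh
    · refine Or.inl ⟨e, ?_, rfl⟩
      have h1 : e.toProd.1 = d.toProd.1 := by simpa using hh
      exact mem_nbhd_of_head (fun hc => hne (congrArg _ hc)) h1
    · simp at hh
    · exact Or.inr rfl
  · rw [liftH_symm]
    exact Or.inl ⟨d.symm, symm_mem_nbhd d, rfl⟩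

lemma E1_mem_nbhd_liftG {d : G.Dart} :
    E1 G H x y ∈ (inflation (joinByEdge G H x y)).neighborSet (liftG G H x y d) ↔
      d.toProd.1 = x := by
  constructor
  · intro h
    rcases mem_inflation_nbhd.mp h with ⟨_, hh⟩ | heq
    · have : (inl x : V ⊕ W) = inl d.toProd.1 := by simpa using hh
      exact (inl.injEq _ _ ▸ this).symm
    · rw [liftG_symm] at heq
      exact absurd heq.symm (liftG_ne_E1 d.symm)
  · intro h
    exact mem_nbhd_of_head (Ne.symm (liftG_ne_E1 d)) (by simp [h])

lemma E2_mem_nbhd_liftH {d : H.Dart} :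
    E2 G H x y ∈ (inflation (joinByEdge G H x y)).neighborSet (liftH G H x y d) ↔
      d.toProd.1 = y := by
  constructor
  · intro h
    rcases mem_inflation_nbhd.mp h with ⟨_, hh⟩ | heq
    · have : (inr y : V ⊕ W) = inr d.toProd.1 := by simpa using hh
      exact (inr.injEq _ _ ▸ this).symm
    · rw [liftH_symm] at heq
      exact absurd heq.symm (liftH_ne_E2 d.symm)
  · intro h
    exact mem_nbhd_of_head (Ne.symm (liftH_ne_E2 d)) (by simp [h])

lemma nbhd_E1_subset :
    (inflation (joinByEdge G H x y)).neighborSet (E1 G H x y) ⊆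
      liftG G H x y '' (Xs G x) ∪ {E2 G H x y} := by
  intro D hD
  rcases mem_inflation_nbhd.mp hD with ⟨hne, hh⟩ | rfl
  · rcases dart_cases D with ⟨e, rfl⟩ | ⟨e, rfl⟩ | rfl | rfl
    · refine Or.inl ⟨e, ?_, rfl⟩
      have : (inl e.toProd.1 : V ⊕ W) = inl x := by simpa using hh
      simpa [Xs] using this
    · simp at hh
    · exact absurd rfl hne
    · simp at hh
  · exact Or.inr rfl

lemma nbhd_E2_subset :
    (inflation (joinByEdge G H x y)).neighborSet (E2 G H x y) ⊆
      liftH G H x y '' (Xs H y) ∪ {E1 G H x y} := by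
  intro D hD
  rcases mem_inflation_nbhd.mp hD with ⟨hne, hh⟩ | rfl
  · rcases dart_cases D with ⟨e, rfl⟩ | ⟨e, rfl⟩ | rfl | rfl
    · simp at hh
    · refine Or.inl ⟨e, ?_, rfl⟩
      have : (inr e.toProd.1 : V ⊕ W) = inr y := by simpa using hh
      simpa [Xs] using this
    · simp at hh
    · exact absurd rfl hne
  · refine Or.inr ?_
    have : (E2 G H x y).symm = E1 G H x y := SimpleGraph.Dart.ext _ _ rfl
    simp [this]

lemma liftG_mem_nbhd_E1 {e : G.Dart} (he : e ∈ Xs G x) :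
    liftG G H x y e ∈ (inflation (joinByEdge G H x y)).neighborSet (E1 G H x y) :=
  mem_nbhd_of_head (liftG_ne_E1 e) (by simpa [Xs] using congrArg (inl : V → V ⊕ W) he)

lemma liftH_mem_nbhd_E2 {e : H.Dart} (he : e ∈ Xs H y) :
    liftH G H x y e ∈ (inflation (joinByEdge G H x y)).neighborSet (E2 G H x y) :=
  mem_nbhd_of_head (liftH_ne_E2 e) (by simpa [Xs] using congrArg (inr : W → V ⊕ W) he)



variable {V W : Type*} [Finite V] [Finite W] {G : SimpleGraph V} {H : SimpleGraph W}
  {x : V} {y : W} {k : ℕ}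

lemma sub_union_G {S : Set (joinByEdge G H x y).Dart} (d : G.Dart) :
    S ∩ (inflation (joinByEdge G H x y)).neighborSet (liftG G H x y d) ⊆
      liftG G H x y '' ((liftG G H x y ⁻¹' S) ∩ (inflation G).neighborSet d) ∪
        ({E1 G H x y} ∩ S) := by
  rintro D ⟨hDS, hDN⟩
  rcases nbhd_liftG_subset d hDN with ⟨e, heN, rfl⟩ | rfl
  · exact Or.inl ⟨e, ⟨hDS, heN⟩, rfl⟩
  · exact Or.inr ⟨rfl, hDS⟩

lemma count_pre_G' {S : Set (joinByEdge G H x y).Dart}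
    (hS : IsKTDS (inflation (joinByEdge G H x y)) k S) (d : G.Dart) :
    k ≤ ((liftG G H x y ⁻¹' S) ∩ (inflation G).neighborSet d).ncard + 1 := by
  have h1 := hS (liftG G H x y d)
  have h2 := Set.ncard_le_ncard (sub_union_G (S := S) d) (Set.toFinite _)
  have h3 := Set.ncard_union_le (liftG G H x y '' ((liftG G H x y ⁻¹' S) ∩ (inflation G).neighborSet d)) ({E1 G H x y} ∩ S)
  have h4 : (liftG G H x y '' ((liftG G H x y ⁻¹' S) ∩ (inflation G).neighborSet d)).ncard
      = ((liftG G H x y ⁻¹' S) ∩ (inflation G).neighborSet d).ncard :=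
    Set.ncard_image_of_injective _ liftG_inj
  have h5 : (({E1 G H x y} : Set _) ∩ S).ncard ≤ 1 := by
    have := Set.ncard_le_ncard (Set.inter_subset_left (s := ({E1 G H x y} : Set _)) (t := S)) (Set.toFinite _)
    simpa using this
  omega

lemma count_pre_G {S : Set (joinByEdge G H x y).Dart}
    (hS : IsKTDS (inflation (joinByEdge G H x y)) k S) (d : G.Dart)
    (h : E1 G H x y ∉ S ∨ d.toProd.1 ≠ x) :
    k ≤ ((liftG G H x y ⁻¹' S) ∩ (inflation G).neighborSet d).ncard := by
  have h1 := hS (liftG G H x y d)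
  have hsub : S ∩ (inflation (joinByEdge G H x y)).neighborSet (liftG G H x y d) ⊆
      liftG G H x y '' ((liftG G H x y ⁻¹' S) ∩ (inflation G).neighborSet d) := by
    rintro D ⟨hDS, hDN⟩
    rcases sub_union_G d ⟨hDS, hDN⟩ with hh | ⟨hE, hDS'⟩
    · exact hh
    · simp only [Set.mem_singleton_iff] at hE
      subst hE
      rcases h with h | h
      · exact absurd hDS h
      · exact absurd (E1_mem_nbhd_liftG.mp hDN) h
  have h2 := Set.ncard_le_ncard hsub (Set.toFinite _)
  rw [Set.ncard_image_of_injective _ liftG_inj] at h2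
  omega

lemma count_E1 {S : Set (joinByEdge G H x y).Dart}
    (hS : IsKTDS (inflation (joinByEdge G H x y)) k S) :
    k ≤ ((liftG G H x y ⁻¹' S) ∩ Xs G x).ncard + 1 := by
  have h1 := hS (E1 G H x y)
  have hsub : S ∩ (inflation (joinByEdge G H x y)).neighborSet (E1 G H x y) ⊆
      liftG G H x y '' ((liftG G H x y ⁻¹' S) ∩ Xs G x) ∪ {E2 G H x y} := by
    rintro D ⟨hDS, hDN⟩
    rcases nbhd_E1_subset hDN with ⟨e, heX, rfl⟩ | rfl
    · exact Or.inl ⟨e, ⟨hDS, heX⟩, rfl⟩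
    · exact Or.inr rfl
  have h2 := Set.ncard_le_ncard hsub (Set.toFinite _)
  have h3 := Set.ncard_union_le (liftG G H x y '' ((liftG G H x y ⁻¹' S) ∩ Xs G x)) ({E2 G H x y} : Set _)
  rw [Set.ncard_image_of_injective _ liftG_inj] at h3
  have h4 : ({E2 G H x y} : Set (joinByEdge G H x y).Dart).ncard = 1 := Set.ncard_singleton _
  omega

lemma side_G (hk : 2 ≤ k) (hdeg : ∀ u : V, k + 1 ≤ (Xs G u).ncard)
    {S : Set (joinByEdge G H x y).Dart}
    (hS : IsKTDS (inflation (joinByEdge G H x y)) k S) :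
    ∃ T : Set G.Dart, IsKTDS (inflation G) k T ∧
      (E1 G H x y ∉ S → T.ncard ≤ (liftG G H x y ⁻¹' S).ncard) ∧
      T.ncard ≤ (liftG G H x y ⁻¹' S).ncard + 2 := by
  set P : Set G.Dart := liftG G H x y ⁻¹' S with hP
  by_cases h1 : E1 G H x y ∈ S
  · by_cases h2 : Xs G x ⊆ P
    · refine ⟨P, ?_, fun hc => le_refl _, Nat.le_add_right _ _⟩
      intro d
      by_cases hd : d.toProd.1 = x
      · have hsub : Xs G x \ {d} ⊆ P ∩ (inflation G).neighborSet d := by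
          rintro e ⟨heX, hne⟩
          exact ⟨h2 heX, mem_nbhd_of_head hne (heX.trans hd.symm)⟩
        have hcard : (Xs G x \ {d}).ncard = (Xs G x).ncard - 1 :=
          Set.ncard_diff_singleton_of_mem hd
        have := Set.ncard_le_ncard hsub (Set.toFinite _)
        have := hdeg x
        omega
      · exact count_pre_G hS d (Or.inr hd)
    · rw [Set.not_subset] at h2
      obtain ⟨d0, hd0x, hd0P⟩ := h2
      refine ⟨insert d0 (insert d0.symm P), ?_, fun hc => absurd h1 hc, ?_⟩
      · intro d
        by_cases hd : d.toProd.1 = x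
        · by_cases hdd : d = d0
          · subst hdd
            have hsub : insert d.symm (P ∩ Xs G x) ⊆
                insert d (insert d.symm P) ∩ (inflation G).neighborSet d := by
              rintro e (rfl | ⟨heP, heX⟩)
              · exact ⟨Or.inr (Or.inl rfl), symm_mem_nbhd d⟩
              · refine ⟨Or.inr (Or.inr heP), mem_nbhd_of_head ?_ (heX.trans hd.symm)⟩
                intro hc; subst hc; exact hd0P heP
            have hnm : d.symm ∉ P ∩ Xs G x := by
              rintro ⟨-, hX⟩
              exact d.snd_ne_fst (hX.trans hd.symm)
            have hcard : (insert d.symm (P ∩ Xs G x)).ncard = (P ∩ Xs G x).ncard + 1 :=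
              Set.ncard_insert_of_notMem hnm (Set.toFinite _)
            have hle := Set.ncard_le_ncard hsub (Set.toFinite _)
            have hce := count_E1 hS
            rw [← hP] at hce
            omega
          · have hsub : insert d0 (P ∩ (inflation G).neighborSet d) ⊆
                insert d0 (insert d0.symm P) ∩ (inflation G).neighborSet d := by
              rintro e (rfl | ⟨heP, heN⟩)
              · exact ⟨Or.inl rfl,
                  mem_nbhd_of_head (fun hc => hdd hc.symm) (hd0x.trans hd.symm)⟩
              · exact ⟨Or.inr (Or.inr heP), heN⟩
            have hnm : d0 ∉ P ∩ (inflation G).neighborSet d := fun hc => hd0P hc.1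
            have hcard : (insert d0 (P ∩ (inflation G).neighborSet d)).ncard
                = (P ∩ (inflation G).neighborSet d).ncard + 1 :=
              Set.ncard_insert_of_notMem hnm (Set.toFinite _)
            have hle := Set.ncard_le_ncard hsub (Set.toFinite _)
            have hce := count_pre_G' hS d
            rw [← hP] at hce
            omega
        · have h3 := count_pre_G hS d (Or.inr hd)
          rw [← hP] at h3
          have hsub : P ∩ (inflation G).neighborSet d ⊆
              insert d0 (insert d0.symm P) ∩ (inflation G).neighborSet d := by
            rintro e ⟨heP, heN⟩; exact ⟨Or.inr (Or.inr heP), heN⟩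
          have := Set.ncard_le_ncard hsub (Set.toFinite _)
          omega
      · have := Set.ncard_insert_le d0 (insert d0.symm P)
        have := Set.ncard_insert_le d0.symm P
        omega
  · exact ⟨P, fun d => count_pre_G hS d (Or.inl h1), fun _ => le_refl _, Nat.le_add_right _ _⟩



variable {V W : Type*} [Finite V] [Finite W] {G : SimpleGraph V} {H : SimpleGraph W}
  {x : V} {y : W} {k : ℕ}

lemma sub_union_H {S : Set (joinByEdge G H x y).Dart} (d : H.Dart) :
    S ∩ (inflation (joinByEdge G H x y)).neighborSet (liftH G H x y d) ⊆
      liftH G H x y '' ((liftH G H x y ⁻¹' S) ∩ (inflation H).neighborSet d) ∪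
        ({E2 G H x y} ∩ S) := by
  rintro D ⟨hDS, hDN⟩
  rcases nbhd_liftH_subset d hDN with ⟨e, heN, rfl⟩ | rfl
  · exact Or.inl ⟨e, ⟨hDS, heN⟩, rfl⟩
  · exact Or.inr ⟨rfl, hDS⟩

lemma count_pre_H' {S : Set (joinByEdge G H x y).Dart}
    (hS : IsKTDS (inflation (joinByEdge G H x y)) k S) (d : H.Dart) :
    k ≤ ((liftH G H x y ⁻¹' S) ∩ (inflation H).neighborSet d).ncard + 1 := by
  have h1 := hS (liftH G H x y d)
  have h2 := Set.ncard_le_ncard (sub_union_H (S := S) d) (Set.toFinite _)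
  have h3 := Set.ncard_union_le (liftH G H x y '' ((liftH G H x y ⁻¹' S) ∩ (inflation H).neighborSet d)) ({E2 G H x y} ∩ S)
  have h4 : (liftH G H x y '' ((liftH G H x y ⁻¹' S) ∩ (inflation H).neighborSet d)).ncard
      = ((liftH G H x y ⁻¹' S) ∩ (inflation H).neighborSet d).ncard :=
    Set.ncard_image_of_injective _ liftH_inj
  have h5 : (({E2 G H x y} : Set _) ∩ S).ncard ≤ 1 := by
    have := Set.ncard_le_ncard (Set.inter_subset_left (s := ({E2 G H x y} : Set _)) (t := S)) (Set.toFinite _)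
    simpa using this
  omega

lemma count_pre_H {S : Set (joinByEdge G H x y).Dart}
    (hS : IsKTDS (inflation (joinByEdge G H x y)) k S) (d : H.Dart)
    (h : E2 G H x y ∉ S ∨ d.toProd.1 ≠ y) :
    k ≤ ((liftH G H x y ⁻¹' S) ∩ (inflation H).neighborSet d).ncard := by
  have h1 := hS (liftH G H x y d)
  have hsub : S ∩ (inflation (joinByEdge G H x y)).neighborSet (liftH G H x y d) ⊆
      liftH G H x y '' ((liftH G H x y ⁻¹' S) ∩ (inflation H).neighborSet d) := by
    rintro D ⟨hDS, hDN⟩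
    rcases sub_union_H d ⟨hDS, hDN⟩ with hh | ⟨hE, hDS'⟩
    · exact hh
    · simp only [Set.mem_singleton_iff] at hE
      subst hE
      rcases h with h | h
      · exact absurd hDS h
      · exact absurd (E2_mem_nbhd_liftH.mp hDN) h
  have h2 := Set.ncard_le_ncard hsub (Set.toFinite _)
  rw [Set.ncard_image_of_injective _ liftH_inj] at h2
  omega

lemma count_E2 {S : Set (joinByEdge G H x y).Dart}
    (hS : IsKTDS (inflation (joinByEdge G H x y)) k S) :
    k ≤ ((liftH G H x y ⁻¹' S) ∩ Xs H y).ncard + 1 := by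
  have h1 := hS (E2 G H x y)
  have hsub : S ∩ (inflation (joinByEdge G H x y)).neighborSet (E2 G H x y) ⊆
      liftH G H x y '' ((liftH G H x y ⁻¹' S) ∩ Xs H y) ∪ {E1 G H x y} := by
    rintro D ⟨hDS, hDN⟩
    rcases nbhd_E2_subset hDN with ⟨e, heX, rfl⟩ | rfl
    · exact Or.inl ⟨e, ⟨hDS, heX⟩, rfl⟩
    · exact Or.inr rfl
  have h2 := Set.ncard_le_ncard hsub (Set.toFinite _)
  have h3 := Set.ncard_union_le (liftH G H x y '' ((liftH G H x y ⁻¹' S) ∩ Xs H y)) ({E1 G H x y} : Set _)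
  rw [Set.ncard_image_of_injective _ liftH_inj] at h3
  have h4 : ({E1 G H x y} : Set (joinByEdge G H x y).Dart).ncard = 1 := Set.ncard_singleton _
  omega

lemma side_H (hk : 2 ≤ k) (hdeg : ∀ u : W, k + 1 ≤ (Xs H u).ncard)
    {S : Set (joinByEdge G H x y).Dart}
    (hS : IsKTDS (inflation (joinByEdge G H x y)) k S) :
    ∃ T : Set H.Dart, IsKTDS (inflation H) k T ∧
      (E2 G H x y ∉ S → T.ncard ≤ (liftH G H x y ⁻¹' S).ncard) ∧
      T.ncard ≤ (liftH G H x y ⁻¹' S).ncard + 2 := by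
  set P : Set H.Dart := liftH G H x y ⁻¹' S with hP
  by_cases h1 : E2 G H x y ∈ S
  · by_cases h2 : Xs H y ⊆ P
    · refine ⟨P, ?_, fun hc => le_refl _, Nat.le_add_right _ _⟩
      intro d
      by_cases hd : d.toProd.1 = y
      · have hsub : Xs H y \ {d} ⊆ P ∩ (inflation H).neighborSet d := by
          rintro e ⟨heX, hne⟩
          exact ⟨h2 heX, mem_nbhd_of_head hne (heX.trans hd.symm)⟩
        have hcard : (Xs H y \ {d}).ncard = (Xs H y).ncard - 1 :=
          Set.ncard_diff_singleton_of_mem hd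
        have := Set.ncard_le_ncard hsub (Set.toFinite _)
        have := hdeg y
        omega
      · exact count_pre_H hS d (Or.inr hd)
    · rw [Set.not_subset] at h2
      obtain ⟨d0, hd0x, hd0P⟩ := h2
      refine ⟨insert d0 (insert d0.symm P), ?_, fun hc => absurd h1 hc, ?_⟩
      · intro d
        by_cases hd : d.toProd.1 = y
        · by_cases hdd : d = d0
          · subst hdd
            have hsub : insert d.symm (P ∩ Xs H y) ⊆
                insert d (insert d.symm P) ∩ (inflation H).neighborSet d := by
              rintro e (rfl | ⟨heP, heX⟩)
              · exact ⟨Or.inr (Or.inl rfl), symm_mem_nbhd d⟩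
              · refine ⟨Or.inr (Or.inr heP), mem_nbhd_of_head ?_ (heX.trans hd.symm)⟩
                intro hc; subst hc; exact hd0P heP
            have hnm : d.symm ∉ P ∩ Xs H y := by
              rintro ⟨-, hX⟩
              exact d.snd_ne_fst (hX.trans hd.symm)
            have hcard : (insert d.symm (P ∩ Xs H y)).ncard = (P ∩ Xs H y).ncard + 1 :=
              Set.ncard_insert_of_notMem hnm (Set.toFinite _)
            have hle := Set.ncard_le_ncard hsub (Set.toFinite _)
            have hce := count_E2 hS
            rw [← hP] at hce
            omega
          · have hsub : insert d0 (P ∩ (inflation H).neighborSet d) ⊆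
                insert d0 (insert d0.symm P) ∩ (inflation H).neighborSet d := by
              rintro e (rfl | ⟨heP, heN⟩)
              · exact ⟨Or.inl rfl,
                  mem_nbhd_of_head (fun hc => hdd hc.symm) (hd0x.trans hd.symm)⟩
              · exact ⟨Or.inr (Or.inr heP), heN⟩
            have hnm : d0 ∉ P ∩ (inflation H).neighborSet d := fun hc => hd0P hc.1
            have hcard : (insert d0 (P ∩ (inflation H).neighborSet d)).ncard
                = (P ∩ (inflation H).neighborSet d).ncard + 1 :=
              Set.ncard_insert_of_notMem hnm (Set.toFinite _)
            have hle := Set.ncard_le_ncard hsub (Set.toFinite _)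
            have hce := count_pre_H' hS d
            rw [← hP] at hce
            omega
        · have h3 := count_pre_H hS d (Or.inr hd)
          rw [← hP] at h3
          have hsub : P ∩ (inflation H).neighborSet d ⊆
              insert d0 (insert d0.symm P) ∩ (inflation H).neighborSet d := by
            rintro e ⟨heP, heN⟩; exact ⟨Or.inr (Or.inr heP), heN⟩
          have := Set.ncard_le_ncard hsub (Set.toFinite _)
          omega
      · have := Set.ncard_insert_le d0 (insert d0.symm P)
        have := Set.ncard_insert_le d0.symm P
        omega
  · exact ⟨P, fun d => count_pre_H hS d (Or.inl h1), fun _ => le_refl _, Nat.le_add_right _ _⟩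



variable {V W : Type*} [Finite V] [Finite W] {G : SimpleGraph V} {H : SimpleGraph W}
  {x : V} {y : W} {k : ℕ}

lemma upper_ktds (hk : 2 ≤ k) (hdegG : ∀ u : V, k + 1 ≤ (Xs G u).ncard)
    (hdegH : ∀ u : W, k + 1 ≤ (Xs H u).ncard)
    {SG : Set G.Dart} {SH : Set H.Dart}
    (hSG : IsKTDS (inflation G) k SG) (hSH : IsKTDS (inflation H) k SH) :
    IsKTDS (inflation (joinByEdge G H x y)) k
      (liftG G H x y '' SG ∪ liftH G H x y '' SH) := by
  intro D
  rcases dart_cases D with ⟨d, rfl⟩ | ⟨d, rfl⟩ | rfl | rfl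
  · have hsub : liftG G H x y '' (SG ∩ (inflation G).neighborSet d) ⊆
        (liftG G H x y '' SG ∪ liftH G H x y '' SH) ∩
          (inflation (joinByEdge G H x y)).neighborSet (liftG G H x y d) := by
      rintro _ ⟨e, ⟨heS, heN⟩, rfl⟩
      exact ⟨Or.inl ⟨e, heS, rfl⟩, liftG_nbhd heN⟩
    have h2 := Set.ncard_le_ncard hsub (Set.toFinite _)
    rw [Set.ncard_image_of_injective _ liftG_inj] at h2
    exact le_trans (hSG d) h2
  · have hsub : liftH G H x y '' (SH ∩ (inflation H).neighborSet d) ⊆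
        (liftG G H x y '' SG ∪ liftH G H x y '' SH) ∩
          (inflation (joinByEdge G H x y)).neighborSet (liftH G H x y d) := by
      rintro _ ⟨e, ⟨heS, heN⟩, rfl⟩
      exact ⟨Or.inr ⟨e, heS, rfl⟩, liftH_nbhd heN⟩
    have h2 := Set.ncard_le_ncard hsub (Set.toFinite _)
    rw [Set.ncard_image_of_injective _ liftH_inj] at h2
    exact le_trans (hSH d) h2
  · obtain ⟨d, hd⟩ : (Xs G x).Nonempty := by
      apply (Set.ncard_pos (Set.toFinite _)).mp
      have := hdegG x
      omega
    have hclq := clique_ge hk hSG d hd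
    have hsub : liftG G H x y '' (SG ∩ Xs G x) ⊆
        (liftG G H x y '' SG ∪ liftH G H x y '' SH) ∩
          (inflation (joinByEdge G H x y)).neighborSet (E1 G H x y) := by
      rintro _ ⟨e, ⟨heS, heX⟩, rfl⟩
      exact ⟨Or.inl ⟨e, heS, rfl⟩, liftG_mem_nbhd_E1 heX⟩
    have h2 := Set.ncard_le_ncard hsub (Set.toFinite _)
    rw [Set.ncard_image_of_injective _ liftG_inj] at h2
    exact le_trans hclq h2
  · obtain ⟨d, hd⟩ : (Xs H y).Nonempty := by
      apply (Set.ncard_pos (Set.toFinite _)).mp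
      have := hdegH y
      omega
    have hclq := clique_ge hk hSH d hd
    have hsub : liftH G H x y '' (SH ∩ Xs H y) ⊆
        (liftG G H x y '' SG ∪ liftH G H x y '' SH) ∩
          (inflation (joinByEdge G H x y)).neighborSet (E2 G H x y) := by
      rintro _ ⟨e, ⟨heS, heX⟩, rfl⟩
      exact ⟨Or.inr ⟨e, heS, rfl⟩, liftH_mem_nbhd_E2 heX⟩
    have h2 := Set.ncard_le_ncard hsub (Set.toFinite _)
    rw [Set.ncard_image_of_injective _ liftH_inj] at h2
    exact le_trans hclq h2

lemma deg_bound {V' : Type*} [Fintype V'] [Nonempty V'] {G' : SimpleGraph V'}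
    [DecidableRel G'.Adj] (h : k < G'.minDegree) :
    ∀ u : V', k + 1 ≤ (Xs G' u).ncard := by
  intro u
  have h1 : G'.minDegree ≤ G'.degree u := G'.minDegree_le_degree u
  have h2 : (G'.neighborSet u).ncard = G'.degree u := by
    rw [← Nat.card_coe_set_eq, Nat.card_eq_fintype_card,
      SimpleGraph.card_neighborSet_eq_degree]
  rw [Xs_ncard, h2]
  omega

lemma XsF_bound (hdegG : ∀ u : V, k + 1 ≤ (Xs G u).ncard)
    (hdegH : ∀ u : W, k + 1 ≤ (Xs H u).ncard) :
    ∀ a : V ⊕ W, k + 1 ≤ (Xs (joinByEdge G H x y) a).ncard := by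
  intro a
  cases a with
  | inl u =>
    have hsub : liftG G H x y '' Xs G u ⊆ Xs (joinByEdge G H x y) (inl u) := by
      rintro _ ⟨e, he, rfl⟩
      simpa [Xs] using congrArg (inl : V → V ⊕ W) he
    have h2 := Set.ncard_le_ncard hsub (Set.toFinite _)
    rw [Set.ncard_image_of_injective _ liftG_inj] at h2
    exact le_trans (hdegG u) h2
  | inr u =>
    have hsub : liftH G H x y '' Xs H u ⊆ Xs (joinByEdge G H x y) (inr u) := by
      rintro _ ⟨e, he, rfl⟩
      simpa [Xs] using congrArg (inr : W → V ⊕ W) he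
    have h2 := Set.ncard_le_ncard hsub (Set.toFinite _)
    rw [Set.ncard_image_of_injective _ liftH_inj] at h2
    exact le_trans (hdegH u) h2

end Stmt8A
end

open Sum Stmt8A in
/-- **Theorem (cut-edge bounds, strict minimum-degree case).** If `F` has a cut-edge `e`
whose removal leaves the two (connected) components `G` and `H`, and
`2 ≤ k < min {δ(G), δ(H)}`, then
`γ_{×k,t}(G_I) + γ_{×k,t}(H_I) - 2 ≤ γ_{×k,t}(F_I) ≤ γ_{×k,t}(G_I) + γ_{×k,t}(H_I)`. -/
theorem stmt8 {V W : Type*} [Fintype V] [Fintype W]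
    (G : SimpleGraph V) (H : SimpleGraph W) [DecidableRel G.Adj] [DecidableRel H.Adj]
    (hG : G.Connected) (hH : H.Connected) (x : V) (y : W) (k : ℕ)
    (hk : 2 ≤ k) (hδ : k < min G.minDegree H.minDegree) :
    ktdn (inflation G) k + ktdn (inflation H) k ≤
        ktdn (inflation (joinByEdge G H x y)) k + 2 ∧
      ktdn (inflation (joinByEdge G H x y)) k ≤
        ktdn (inflation G) k + ktdn (inflation H) k := by
  haveI : Nonempty V := hG.nonempty
  haveI : Nonempty W := hH.nonempty
  have hdegG : ∀ u : V, k + 1 ≤ (Xs G u).ncard :=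
    deg_bound (lt_of_lt_of_le hδ (min_le_left _ _))
  have hdegH : ∀ u : W, k + 1 ≤ (Xs H u).ncard :=
    deg_bound (lt_of_lt_of_le hδ (min_le_right _ _))
  have hdegF := XsF_bound (G := G) (H := H) (x := x) (y := y) hdegG hdegH
  obtain ⟨SG, hSG, hSGc⟩ := ktdn_attained (univ_ktds hdegG)
  obtain ⟨SH, hSH, hSHc⟩ := ktdn_attained (univ_ktds hdegH)
  obtain ⟨S, hS, hSc⟩ := ktdn_attained (univ_ktds hdegF)
  constructor
  · -- lower bound
    obtain ⟨TG, hTG, hTG0, hTG2⟩ := side_G hk hdegG hS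
    obtain ⟨TH, hTH, hTH0, hTH2⟩ := side_H hk hdegH hS
    have hgG := ktdn_le hTG
    have hgH := ktdn_le hTH
    set P : Set (joinByEdge G H x y).Dart := {E1 G H x y, E2 G H x y} with hPdef
    have hsplit := Set.ncard_inter_add_ncard_diff_eq_ncard S P (Set.toFinite _)
    set A : Set (joinByEdge G H x y).Dart := liftG G H x y '' (liftG G H x y ⁻¹' S) with hAdef
    set B : Set (joinByEdge G H x y).Dart := liftH G H x y '' (liftH G H x y ⁻¹' S) with hBdef
    have hAsub : A ⊆ S \ P := by
      rintro _ ⟨e, he, rfl⟩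
      refine ⟨he, ?_⟩
      intro hmem
      rcases hmem with h | h
      · exact liftG_ne_E1 e h
      · exact liftG_ne_E2 e (Set.mem_singleton_iff.mp h)
    have hBsub : B ⊆ S \ P := by
      rintro _ ⟨e, he, rfl⟩
      refine ⟨he, ?_⟩
      intro hmem
      rcases hmem with h | h
      · exact liftH_ne_E1 e h
      · exact liftH_ne_E2 e (Set.mem_singleton_iff.mp h)
    have hdisj : Disjoint A B := by
      rw [Set.disjoint_left]
      rintro _ ⟨e, _, rfl⟩ ⟨f, _, hf⟩
      exact liftG_ne_liftH e f hf.symm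
    have hUcard : (A ∪ B).ncard = A.ncard + B.ncard :=
      Set.ncard_union_eq hdisj (Set.toFinite _) (Set.toFinite _)
    have hUle : (A ∪ B).ncard ≤ (S \ P).ncard :=
      Set.ncard_le_ncard (Set.union_subset hAsub hBsub) (Set.toFinite _)
    have hAc : A.ncard = (liftG G H x y ⁻¹' S).ncard :=
      Set.ncard_image_of_injective _ liftG_inj
    have hBc : B.ncard = (liftH G H x y ⁻¹' S).ncard :=
      Set.ncard_image_of_injective _ liftH_inj
    by_cases h1 : E1 G H x y ∈ S <;> by_cases h2 : E2 G H x y ∈ S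
    · have hP2 : 2 ≤ (S ∩ P).ncard := by
        have hPsub : P ⊆ S ∩ P := by
          intro D hD
          rcases hD with h | h
          · exact ⟨h ▸ h1, Or.inl h⟩
          · exact ⟨(Set.mem_singleton_iff.mp h) ▸ h2, Or.inr h⟩
        have hle := Set.ncard_le_ncard hPsub (Set.toFinite _)
        rw [Set.ncard_pair E1_ne_E2] at hle
        exact hle
      omega
    · have hP1 : 1 ≤ (S ∩ P).ncard :=
        (Set.ncard_pos (Set.toFinite _)).mpr ⟨E1 G H x y, h1, Or.inl rfl⟩
      have := hTH0 h2
      omega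
    · have hP1 : 1 ≤ (S ∩ P).ncard :=
        (Set.ncard_pos (Set.toFinite _)).mpr ⟨E2 G H x y, h2, Or.inr rfl⟩
      have := hTG0 h1
      omega
    · have := hTG0 h1
      have := hTH0 h2
      omega
  · -- upper bound
    have hU := upper_ktds (x := x) (y := y) hk hdegG hdegH hSG hSH
    have h1 := ktdn_le hU
    have h2 := Set.ncard_union_le (liftG G H x y '' SG) (liftH G H x y '' SH)
    rw [Set.ncard_image_of_injective _ liftG_inj,
      Set.ncard_image_of_injective _ liftH_inj] at h2
    omega
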